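/- Condition number estimate for NOSAS with inexact solver: under the inexact coarse bilinear form â_0 with spectral equivalence A_ΓΓ ≤ 3 Â_ΓΓ and threshold gap λ̂_min(η), the preconditioned operator T̂_A satisfies (2 + 7 max{1, 1/λ̂_min(η)})^{-1} a(u,u) ≤ a(T̂_A u, u) ≤ 4 a(u,u) for all u, where the upper bound follows from a(R̂_0^T u_0, R̂_0^T u_0) ≤ 3 â_0(u_0,u_0), local exactness ω_i = 1, and μ(ε) = 1. -/

import Mathlib

open Matrix

/-- dot product against a PSD matrix is nonnegative. -/
lemma aux_psd_nonneg {k : ℕ} {B : Matrix (Fin k) (Fin k) ℝ} (hB : B.PosSemidef)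
    (x : Fin k → ℝ) : 0 ≤ x ⬝ᵥ B *ᵥ x := by
  have := hB.re_dotProduct_nonneg x
  simpa using this

/-- symmetry of a PSD real bilinear form. -/
lemma aux_psd_symm {k : ℕ} {B : Matrix (Fin k) (Fin k) ℝ} (hB : B.PosSemidef)
    (x y : Fin k → ℝ) : x ⬝ᵥ B *ᵥ y = y ⬝ᵥ B *ᵥ x := by
  have hBt : Bᵀ = B := by
    have := hB.isHermitian
    simpa [Matrix.IsHermitian, Matrix.conjTranspose_eq_transpose_of_trivial] using this
  calc x ⬝ᵥ B *ᵥ y = (x ᵥ* B) ⬝ᵥ y := (Matrix.dotProduct_mulVec _ _ _)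
    _ = (B *ᵥ x) ⬝ᵥ y := by
        conv_lhs => rw [← hBt]
        rw [Matrix.vecMul_transpose]
    _ = y ⬝ᵥ B *ᵥ x := dotProduct_comm _ _

/-- Cauchy–Schwarz for a PSD real bilinear form. -/
lemma aux_psd_cs {k : ℕ} {B : Matrix (Fin k) (Fin k) ℝ} (hB : B.PosSemidef)
    (x y : Fin k → ℝ) : (x ⬝ᵥ B *ᵥ y) ^ 2 ≤ (x ⬝ᵥ B *ᵥ x) * (y ⬝ᵥ B *ᵥ y) := by
  have key : ∀ t : ℝ, 0 ≤ (y ⬝ᵥ B *ᵥ y) * (t * t) + (2 * (x ⬝ᵥ B *ᵥ y)) * t + (x ⬝ᵥ B *ᵥ x) := by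
    intro t
    have h := aux_psd_nonneg hB (x + t • y)
    have hsym := aux_psd_symm hB x y
    have hexp : (x + t • y) ⬝ᵥ B *ᵥ (x + t • y)
        = (y ⬝ᵥ B *ᵥ y) * (t * t) + (2 * (x ⬝ᵥ B *ᵥ y)) * t + (x ⬝ᵥ B *ᵥ x) := by
      rw [Matrix.mulVec_add, Matrix.mulVec_smul, add_dotProduct,
        dotProduct_add, dotProduct_add, smul_dotProduct,
        dotProduct_smul, smul_dotProduct, dotProduct_smul, ← hsym]
      simp [smul_eq_mul]; ring
    linarith [hexp ▸ h]
  have hd := discrim_le_zero key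
  simp only [discrim] at hd
  nlinarith [hd]

lemma aux_sum_mulVec {ι : Type*} (s : Finset ι) {k l : ℕ}
    (M : ι → Matrix (Fin k) (Fin l) ℝ) (v : Fin l → ℝ) :
    (∑ i ∈ s, M i) *ᵥ v = ∑ i ∈ s, M i *ᵥ v := by
  induction s using Finset.cons_induction with
  | empty => simp
  | cons a s ha ih => simp [Matrix.add_mulVec, ih]

lemma aux_mulVec_sum {ι : Type*} (s : Finset ι) {k l : ℕ}
    (M : Matrix (Fin k) (Fin l) ℝ) (v : ι → Fin l → ℝ) :
    M *ᵥ (∑ i ∈ s, v i) = ∑ i ∈ s, M *ᵥ v i := by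
  induction s using Finset.cons_induction with
  | empty => simp
  | cons a s ha ih => simp [Matrix.mulVec_add, ih]

lemma aux_sum_dotProduct {ι : Type*} (s : Finset ι) {k : ℕ}
    (v : ι → Fin k → ℝ) (w : Fin k → ℝ) :
    (∑ i ∈ s, v i) ⬝ᵥ w = ∑ i ∈ s, v i ⬝ᵥ w := by
  induction s using Finset.cons_induction with
  | empty => simp
  | cons a s ha ih => simp [add_dotProduct, ih]

lemma aux_dotProduct_sum {ι : Type*} (s : Finset ι) {k : ℕ}
    (w : Fin k → ℝ) (v : ι → Fin k → ℝ) :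
    w ⬝ᵥ (∑ i ∈ s, v i) = ∑ i ∈ s, w ⬝ᵥ v i := by
  induction s using Finset.cons_induction with
  | empty => simp
  | cons a s ha ih => simp [dotProduct_add, ih]

/-- generic Cauchy–Schwarz-type lemma for sums. -/
lemma aux_sum_sq_le {ι : Type*} (s : Finset ι) (p q r : ι → ℝ)
    (hp : ∀ i, 0 ≤ p i) (hr : ∀ i, 0 ≤ r i)
    (h : ∀ i ∈ s, (q i) ^ 2 ≤ p i * r i) :
    (∑ i ∈ s, q i) ^ 2 ≤ (∑ i ∈ s, p i) * (∑ i ∈ s, r i) := by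
  have h1 : ∑ i ∈ s, q i ≤ ∑ i ∈ s, Real.sqrt (p i) * Real.sqrt (r i) := by
    refine Finset.sum_le_sum fun i hi => ?_
    have : q i ≤ Real.sqrt (p i * r i) := by
      have := Real.sqrt_le_sqrt (h i hi)
      calc q i ≤ |q i| := le_abs_self _
        _ = Real.sqrt ((q i)^2) := by rw [Real.sqrt_sq_eq_abs]
        _ ≤ Real.sqrt (p i * r i) := this
    simpa [Real.sqrt_mul (hp i)] using this
  have h2 := Real.sum_sqrt_mul_sqrt_le s hp hr
  have h3 : ∑ i ∈ s, q i ≤ Real.sqrt (∑ i ∈ s, p i) * Real.sqrt (∑ i ∈ s, r i) := h1.trans h2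
  have hq0 : -(Real.sqrt (∑ i ∈ s, p i) * Real.sqrt (∑ i ∈ s, r i)) ≤ ∑ i ∈ s, q i := by
    have h1' : ∑ i ∈ s, -q i ≤ ∑ i ∈ s, Real.sqrt (p i) * Real.sqrt (r i) := by
      refine Finset.sum_le_sum fun i hi => ?_
      have : -q i ≤ Real.sqrt (p i * r i) := by
        have := Real.sqrt_le_sqrt (h i hi)
        calc -q i ≤ |q i| := neg_le_abs _
          _ = Real.sqrt ((q i)^2) := by rw [Real.sqrt_sq_eq_abs]
          _ ≤ Real.sqrt (p i * r i) := this
      simpa [Real.sqrt_mul (hp i)] using this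
    simp only [Finset.sum_neg_distrib] at h1'
    linarith [h1'.trans h2]
  have habs : |∑ i ∈ s, q i| ≤ Real.sqrt (∑ i ∈ s, p i) * Real.sqrt (∑ i ∈ s, r i) :=
    abs_le.2 ⟨hq0, h3⟩
  calc (∑ i ∈ s, q i)^2 = |∑ i ∈ s, q i|^2 := (sq_abs _).symm
    _ ≤ (Real.sqrt (∑ i ∈ s, p i) * Real.sqrt (∑ i ∈ s, r i))^2 := by
        exact pow_le_pow_left₀ (abs_nonneg _) habs 2
    _ = (∑ i ∈ s, p i) * (∑ i ∈ s, r i) := by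
        rw [mul_pow, Real.sq_sqrt (Finset.sum_nonneg fun i _ => hp i),
          Real.sq_sqrt (Finset.sum_nonneg fun i _ => hr i)]

/-- two-term Cauchy–Schwarz combination. -/
lemma aux_two_cs {q0 Q p0 P r0 R : ℝ} (hp0 : 0 ≤ p0) (hP : 0 ≤ P) (hr0 : 0 ≤ r0) (hR : 0 ≤ R)
    (h0 : q0 ^ 2 ≤ p0 * r0) (h1 : Q ^ 2 ≤ P * R) :
    (q0 + Q) ^ 2 ≤ (p0 + P) * (r0 + R) := by
  have hq : q0^2 * Q^2 ≤ (p0 * r0) * (P * R) :=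
    mul_le_mul h0 h1 (sq_nonneg Q) (mul_nonneg hp0 hr0)
  nlinarith [sq_nonneg (p0*R - P*r0), sq_nonneg (q0*Q), mul_nonneg hp0 hR, mul_nonneg hP hr0,
    sq_nonneg (q0 - Q), sq_nonneg (q0 + Q)]

/-- adjoint identity for rectangular matrices. -/
lemma aux_adj {n q : ℕ} (M : Matrix (Fin n) (Fin q) ℝ) (w : Fin q → ℝ) (z : Fin n → ℝ) :
    (M *ᵥ w) ⬝ᵥ z = w ⬝ᵥ (Mᵀ *ᵥ z) := by
  calc (M *ᵥ w) ⬝ᵥ z = z ⬝ᵥ (M *ᵥ w) := dotProduct_comm _ _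
    _ = (z ᵥ* M) ⬝ᵥ w := Matrix.dotProduct_mulVec _ _ _
    _ = w ⬝ᵥ (z ᵥ* M) := dotProduct_comm _ _
    _ = w ⬝ᵥ (Mᵀ *ᵥ z) := by rw [Matrix.mulVec_transpose]


/-- Theorem 4.6 of the paper: condition number estimate for
NOSAS with inexact coarse solver. With stable decomposition constant
`C0² = 2 + 7 max{1, 1/λ̂_min(η)}`, coarse stability
`a(R̂₀ᵀ u₀, R̂₀ᵀ u₀) ≤ 3 â₀(u₀,u₀)`, exact local solvers (`ω_i = 1`) and
pairwise `a`-orthogonal local spaces (`μ(ε) = 1`), the preconditioned operator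
`T̂_A` satisfies
`(2 + 7 max{1, 1/λ̂_min(η)})⁻¹ a(u,u) ≤ a(T̂_A u, u) ≤ 4 a(u,u)`. -/
theorem nosas_inexact_condition_number
    {n p N : ℕ}
    (A : Matrix (Fin n) (Fin n) ℝ) (hA : A.PosDef)
    (A0hat : Matrix (Fin p) (Fin p) ℝ) (hA0hat : A0hat.PosDef)
    (R0T : Matrix (Fin n) (Fin p) ℝ)
    (m : Fin N → ℕ)
    (Ai : ∀ i, Matrix (Fin (m i)) (Fin (m i)) ℝ) (hAi : ∀ i, (Ai i).PosDef)
    (RT : ∀ i, Matrix (Fin n) (Fin (m i)) ℝ)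
    (lamhat : ℝ) (hlam : 0 < lamhat)
    (hloc : ∀ i, Ai i = (RT i)ᵀ * A * RT i)
    (horth : ∀ i j, i ≠ j → ∀ (ui : Fin (m i) → ℝ) (uj : Fin (m j) → ℝ),
      (RT i *ᵥ ui) ⬝ᵥ (A *ᵥ (RT j *ᵥ uj)) = 0)
    (hcoarse : ∀ u0 : Fin p → ℝ,
      (R0T *ᵥ u0) ⬝ᵥ (A *ᵥ (R0T *ᵥ u0)) ≤ 3 * (u0 ⬝ᵥ (A0hat *ᵥ u0)))
    (hdecomp : ∀ u : Fin n → ℝ, ∃ (u0 : Fin p → ℝ) (ui : (i : Fin N) → Fin (m i) → ℝ),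
      u = R0T *ᵥ u0 + ∑ i, RT i *ᵥ ui i ∧
        u0 ⬝ᵥ (A0hat *ᵥ u0) + ∑ i, ui i ⬝ᵥ (Ai i *ᵥ ui i) ≤
          (2 + 7 * max 1 (1 / lamhat)) * (u ⬝ᵥ (A *ᵥ u))) :
    ∀ u : Fin n → ℝ,
      (2 + 7 * max 1 (1 / lamhat))⁻¹ * (u ⬝ᵥ (A *ᵥ u)) ≤
          ((R0T * A0hat⁻¹ * R0Tᵀ * A + ∑ i, RT i * (Ai i)⁻¹ * (RT i)ᵀ * A) *ᵥ u) ⬝ᵥ (A *ᵥ u) ∧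
        ((R0T * A0hat⁻¹ * R0Tᵀ * A + ∑ i, RT i * (Ai i)⁻¹ * (RT i)ᵀ * A) *ᵥ u) ⬝ᵥ (A *ᵥ u) ≤
          4 * (u ⬝ᵥ (A *ᵥ u)) := by
  intro u
  have hC9 : (9:ℝ) ≤ 2 + 7 * max 1 (1 / lamhat) := by
    have : (1:ℝ) ≤ max 1 (1 / lamhat) := le_max_left _ _
    linarith
  have hCpos : (0:ℝ) < 2 + 7 * max 1 (1 / lamhat) := by linarith
  have hApsd := hA.posSemidef
  have hA0psd := hA0hat.posSemidef
  have hAipsd := fun i => (hAi i).posSemidef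
  have hdet0 : IsUnit A0hat.det := hA0hat.det_pos.ne'.isUnit
  have hdeti : ∀ i, IsUnit (Ai i).det := fun i => (hAi i).det_pos.ne'.isUnit
  -- residual-type vectors
  set v0 : Fin p → ℝ := A0hat⁻¹ *ᵥ (R0Tᵀ *ᵥ (A *ᵥ u)) with hv0
  set vv : ∀ i, Fin (m i) → ℝ := fun i => (Ai i)⁻¹ *ᵥ ((RT i)ᵀ *ᵥ (A *ᵥ u)) with hvv
  have hA0v0 : A0hat *ᵥ v0 = R0Tᵀ *ᵥ (A *ᵥ u) := by
    rw [hv0, Matrix.mulVec_mulVec, Matrix.mul_nonsing_inv _ hdet0, Matrix.one_mulVec]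
  have hAivi : ∀ i, Ai i *ᵥ vv i = (RT i)ᵀ *ᵥ (A *ᵥ u) := by
    intro i
    show Ai i *ᵥ ((Ai i)⁻¹ *ᵥ ((RT i)ᵀ *ᵥ (A *ᵥ u))) = _
    rw [Matrix.mulVec_mulVec, Matrix.mul_nonsing_inv _ (hdeti i), Matrix.one_mulVec]
  have hpair0 : ∀ w0 : Fin p → ℝ, (R0T *ᵥ w0) ⬝ᵥ (A *ᵥ u) = w0 ⬝ᵥ (A0hat *ᵥ v0) := by
    intro w0; rw [aux_adj, hA0v0]
  have hpairi : ∀ i (wi : Fin (m i) → ℝ),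
      (RT i *ᵥ wi) ⬝ᵥ (A *ᵥ u) = wi ⬝ᵥ (Ai i *ᵥ vv i) := by
    intro i wi; rw [aux_adj, hAivi]
  have hlocform : ∀ i (x y : Fin (m i) → ℝ),
      (RT i *ᵥ x) ⬝ᵥ (A *ᵥ (RT i *ᵥ y)) = x ⬝ᵥ (Ai i *ᵥ y) := by
    intro i x y
    rw [aux_adj, hloc i, Matrix.mulVec_mulVec, Matrix.mulVec_mulVec]
  set t0 : Fin n → ℝ := R0T *ᵥ v0 with ht0
  set tt : ∀ i, Fin n → ℝ := fun i => RT i *ᵥ vv i with htt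
  set α0 : ℝ := v0 ⬝ᵥ (A0hat *ᵥ v0) with hα0
  set αi : Fin N → ℝ := fun i => vv i ⬝ᵥ (Ai i *ᵥ vv i) with hαi
  have hα0nn : 0 ≤ α0 := aux_psd_nonneg hA0psd v0
  have hαinn : ∀ i, 0 ≤ αi i := fun i => aux_psd_nonneg (hAipsd i) (vv i)
  have ht0Au : t0 ⬝ᵥ (A *ᵥ u) = α0 := hpair0 v0
  have htiAu : ∀ i, tt i ⬝ᵥ (A *ᵥ u) = αi i := fun i => hpairi i (vv i)
  have haunn : 0 ≤ u ⬝ᵥ (A *ᵥ u) := aux_psd_nonneg hApsd u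
  -- T u decomposition
  have hM0 : (R0T * A0hat⁻¹ * R0Tᵀ * A) *ᵥ u = t0 := by
    rw [ht0, hv0]
    simp only [Matrix.mulVec_mulVec, Matrix.mul_assoc]
  have hMi : ∀ i, (RT i * (Ai i)⁻¹ * (RT i)ᵀ * A) *ᵥ u = tt i := by
    intro i
    show _ = RT i *ᵥ ((Ai i)⁻¹ *ᵥ ((RT i)ᵀ *ᵥ (A *ᵥ u)))
    simp only [Matrix.mulVec_mulVec, Matrix.mul_assoc]
  have hTu : ((R0T * A0hat⁻¹ * R0Tᵀ * A + ∑ i, RT i * (Ai i)⁻¹ * (RT i)ᵀ * A) *ᵥ u) ⬝ᵥ (A *ᵥ u)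
      = α0 + ∑ i, αi i := by
    rw [Matrix.add_mulVec, add_dotProduct, aux_sum_mulVec, aux_sum_dotProduct, hM0,
      ht0Au]
    congr 1
    exact Finset.sum_congr rfl fun i _ => by rw [hMi i, htiAu i]
  -- upper bound, coarse part
  have h1 : α0 ≤ 3 * (u ⬝ᵥ (A *ᵥ u)) := by
    have hcs := aux_psd_cs hApsd t0 u
    rw [ht0Au] at hcs
    have hct : t0 ⬝ᵥ (A *ᵥ t0) ≤ 3 * α0 := hcoarse v0
    rcases hα0nn.eq_or_lt with h | h
    · rw [← h]; positivity
    · have key : α0 * α0 ≤ α0 * (3 * (u ⬝ᵥ (A *ᵥ u))) := by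
        nlinarith [mul_le_mul_of_nonneg_right hct haunn]
      exact le_of_mul_le_mul_left key h
  -- upper bound, local part
  have hsAu : (∑ i, tt i) ⬝ᵥ (A *ᵥ u) = ∑ i, αi i := by
    rw [aux_sum_dotProduct]
    exact Finset.sum_congr rfl fun i _ => htiAu i
  have hsAs : (∑ i, tt i) ⬝ᵥ (A *ᵥ (∑ i, tt i)) = ∑ i, αi i := by
    rw [aux_sum_dotProduct]
    refine Finset.sum_congr rfl fun i _ => ?_
    rw [aux_mulVec_sum, aux_dotProduct_sum]
    rw [Finset.sum_eq_single i
      (fun j _ hj => horth i j (Ne.symm hj) (vv i) (vv j)) (by simp)]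
    rw [hlocform i (vv i) (vv i)]
  have h2 : ∑ i, αi i ≤ u ⬝ᵥ (A *ᵥ u) := by
    have hcs := aux_psd_cs hApsd (∑ i, tt i) u
    rw [hsAu, hsAs] at hcs
    have hSnn : 0 ≤ ∑ i, αi i := Finset.sum_nonneg fun i _ => hαinn i
    rcases hSnn.eq_or_lt with h | h
    · rw [← h]; exact haunn
    · have key : (∑ i, αi i) * (∑ i, αi i) ≤ (∑ i, αi i) * (u ⬝ᵥ (A *ᵥ u)) := by
        nlinarith
      exact le_of_mul_le_mul_left key h
  rw [hTu]
  constructor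
  · -- lower bound
    obtain ⟨u0, w, hdec, hbound⟩ := hdecomp u
    have hsplit : u ⬝ᵥ (A *ᵥ u)
        = u0 ⬝ᵥ (A0hat *ᵥ v0) + ∑ i, w i ⬝ᵥ (Ai i *ᵥ vv i) := by
      nth_rewrite 1 [hdec]
      rw [add_dotProduct, aux_sum_dotProduct, hpair0 u0]
      congr 1
      exact Finset.sum_congr rfl fun i _ => hpairi i (w i)
    have hq0 : (u0 ⬝ᵥ (A0hat *ᵥ v0)) ^ 2 ≤ (u0 ⬝ᵥ (A0hat *ᵥ u0)) * α0 :=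
      aux_psd_cs hA0psd u0 v0
    have hQ : (∑ i, w i ⬝ᵥ (Ai i *ᵥ vv i)) ^ 2
        ≤ (∑ i, w i ⬝ᵥ (Ai i *ᵥ w i)) * (∑ i, αi i) :=
      aux_sum_sq_le Finset.univ _ _ _ (fun i => aux_psd_nonneg (hAipsd i) (w i))
        (fun i => hαinn i) (fun i _ => aux_psd_cs (hAipsd i) (w i) (vv i))
    have hwnn : 0 ≤ ∑ i, w i ⬝ᵥ (Ai i *ᵥ w i) :=
      Finset.sum_nonneg fun i _ => aux_psd_nonneg (hAipsd i) (w i)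
    have hSnn : 0 ≤ ∑ i, αi i := Finset.sum_nonneg fun i _ => hαinn i
    have hbig : (u ⬝ᵥ (A *ᵥ u)) ^ 2
        ≤ ((u0 ⬝ᵥ (A0hat *ᵥ u0)) + ∑ i, w i ⬝ᵥ (Ai i *ᵥ w i)) * (α0 + ∑ i, αi i) := by
      rw [hsplit]
      exact aux_two_cs (aux_psd_nonneg hA0psd u0) hwnn hα0nn hSnn hq0 hQ
    have hTnn : 0 ≤ α0 + ∑ i, αi i := add_nonneg hα0nn hSnn
    have hfin : (u ⬝ᵥ (A *ᵥ u)) ^ 2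
        ≤ ((2 + 7 * max 1 (1 / lamhat)) * (u ⬝ᵥ (A *ᵥ u))) * (α0 + ∑ i, αi i) :=
      hbig.trans (mul_le_mul_of_nonneg_right hbound hTnn)
    rcases haunn.eq_or_lt with h | h
    · rw [← h, mul_zero]; exact hTnn
    · have key : u ⬝ᵥ (A *ᵥ u) ≤ (2 + 7 * max 1 (1 / lamhat)) * (α0 + ∑ i, αi i) := by
        have : (u ⬝ᵥ (A *ᵥ u)) * (u ⬝ᵥ (A *ᵥ u))
            ≤ (u ⬝ᵥ (A *ᵥ u)) * ((2 + 7 * max 1 (1 / lamhat)) * (α0 + ∑ i, αi i)) := by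
          nlinarith
        exact le_of_mul_le_mul_left this h
      calc (2 + 7 * max 1 (1 / lamhat))⁻¹ * (u ⬝ᵥ (A *ᵥ u))
          ≤ (2 + 7 * max 1 (1 / lamhat))⁻¹
            * ((2 + 7 * max 1 (1 / lamhat)) * (α0 + ∑ i, αi i)) :=
            mul_le_mul_of_nonneg_left key (inv_nonneg.2 hCpos.le)
        _ = α0 + ∑ i, αi i := by
            rw [← mul_assoc, inv_mul_cancel₀ hCpos.ne', one_mul]
  · linarith
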